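/- Let f₁,…,fₙ : X → X be continuous open maps (X the circle S¹ or a closed interval) and let M be a minimal set for IFS(f₁,…,fₙ). If the interior of M is empty, then M is either finite or a Cantor set. -/

import Mathlib

open Set Topology Filter

/-- The circle. -/
abbrev S1 := AddCircle (1 : ℝ)

/-- Apply a word `l = [i₁, …, i_k]` of generators: `f i₁ ∘ ⋯ ∘ f i_k`. -/
def applyWord {X : Type*} {n : ℕ} (f : Fin n → X → X) (l : List (Fin n)) (x : X) : X :=
  l.foldr (fun i y => f i y) x

/-- The orbit of `x` under the semigroup `IFS(f₁,…,fₙ)` (nonempty words). -/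
def orbitIFS {X : Type*} {n : ℕ} (f : Fin n → X → X) (x : X) : Set X :=
  {y | ∃ l : List (Fin n), l ≠ [] ∧ y = applyWord f l x}

/-- `M` is a minimal set for the IFS generated by `f₁,…,fₙ`. -/
def IsMinimalIFS {X : Type*} [TopologicalSpace X] {n : ℕ} (f : Fin n → X → X)
    (M : Set X) : Prop :=
  M.Nonempty ∧ IsClosed M ∧ (∀ i, f i '' M ⊆ M) ∧
    ∀ x ∈ M, closure (orbitIFS f x) = M

/-- A Cantor set: nonempty, compact, perfect and totally disconnected. -/
def IsCantorSet {X : Type*} [TopologicalSpace X] (K : Set X) : Prop :=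
  K.Nonempty ∧ IsCompact K ∧ Perfect K ∧ IsTotallyDisconnected K

/-- `X` is (homeomorphic to) the circle or a (nondegenerate) closed interval. -/
def IsCircleOrInterval (X : Type*) [TopologicalSpace X] : Prop :=
  Nonempty (X ≃ₜ S1) ∨ ∃ a b : ℝ, a < b ∧ Nonempty (X ≃ₜ Set.Icc a b)

/-- The canonical decomposition `M = 𝓘 ∪ K ∪ N` of a closed set:
`𝓘` is the interior (union of components of the interior), `K` is the maximal
Cantor set contained in `M \ 𝓘` (possibly empty), and `N` is the countable remainder. -/
def IsCanonicalDecomp {X : Type*} [TopologicalSpace X] (M I K N : Set X) : Prop :=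
  I = interior M ∧
  (IsCantorSet K ∨ K = ∅) ∧
  K ⊆ M \ I ∧
  (∀ K₁ : Set X, IsCantorSet K₁ → K ⊆ K₁ → K₁ ⊆ M \ I → K₁ = K) ∧
  N = M \ (I ∪ K) ∧
  N.Countable

/-- A symmetric Cantorval: a nonempty compact set which is the closure of its interior,
and such that both endpoints of every nontrivial connected component are accumulation
points of one-point connected components. -/
def IsSymmetricCantorval {X : Type*} [TopologicalSpace X] (M : Set X) : Prop :=
  M.Nonempty ∧ IsCompact M ∧ M = closure (interior M) ∧
  ∀ x ∈ M, ¬ (connectedComponentIn M x).Subsingleton →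
    ∀ z ∈ frontier (connectedComponentIn M x),
      AccPt z (𝓟 {y | y ∈ M ∧ connectedComponentIn M y = {y}})



/-- No nonempty open subset of ℝ has a maximum element. -/
lemma no_open_le {s : Set ℝ} (hs : IsOpen s) {m : ℝ} (hm : m ∈ s)
    (hle : ∀ x ∈ s, x ≤ m) : False := by
  obtain ⟨ε, hε, hball⟩ := Metric.isOpen_iff.mp hs m hm
  have h1 : m + ε / 2 ∈ s := by
    apply hball
    rw [Metric.mem_ball, Real.dist_eq]
    rw [abs_lt]; constructor <;> linarith
  linarith [hle _ h1]

lemma no_open_ge {s : Set ℝ} (hs : IsOpen s) {m : ℝ} (hm : m ∈ s)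
    (hle : ∀ x ∈ s, m ≤ x) : False := by
  obtain ⟨ε, hε, hball⟩ := Metric.isOpen_iff.mp hs m hm
  have h1 : m - ε / 2 ∈ s := by
    apply hball
    rw [Metric.mem_ball, Real.dist_eq]
    rw [abs_lt]; constructor <;> linarith
  linarith [hle _ h1]

/-- Core lemma on ℝ: a map, continuous and relatively open on `V`, cannot take the
same value at two points `p < q` with `Icc p q ⊆ V` unless it fails openness. -/
lemma coreR {V : Set ℝ} {h : ℝ → ℝ} (hc : ContinuousOn h V)
    (ho : ∀ O : Set ℝ, O ⊆ V → IsOpen O → IsOpen (h '' O))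
    {p q : ℝ} (hpq : p < q) (hIcc : Icc p q ⊆ V) (hval : h p = h q) : False := by
  have hK : IsCompact (Icc p q) := isCompact_Icc
  have hne : (Icc p q).Nonempty := ⟨p, left_mem_Icc.2 hpq.le⟩
  have hcK : ContinuousOn h (Icc p q) := hc.mono hIcc
  obtain ⟨w1, hw1K, hw1⟩ := hK.exists_isMaxOn hne hcK
  obtain ⟨w2, hw2K, hw2⟩ := hK.exists_isMinOn hne hcK
  rw [isMaxOn_iff] at hw1
  rw [isMinOn_iff] at hw2
  have hO : IsOpen (h '' Ioo p q) := ho _ (Ioo_subset_Icc_self.trans hIcc) isOpen_Ioo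
  have hmid : (p + q) / 2 ∈ Ioo p q := ⟨by linarith, by linarith⟩
  by_cases h1 : h p < h w1
  · have hw1p : w1 ≠ p := by rintro rfl; exact lt_irrefl _ h1
    have hw1q : w1 ≠ q := by rintro rfl; rw [hval] at h1; exact lt_irrefl _ h1
    have hw1mem : w1 ∈ Ioo p q :=
      ⟨lt_of_le_of_ne hw1K.1 (Ne.symm hw1p), lt_of_le_of_ne hw1K.2 hw1q⟩
    refine no_open_le hO ⟨w1, hw1mem, rfl⟩ ?_
    rintro x ⟨u, hu, rfl⟩
    exact hw1 u (Ioo_subset_Icc_self hu)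
  · by_cases h2 : h w2 < h p
    · have hw2p : w2 ≠ p := by rintro rfl; exact lt_irrefl _ h2
      have hw2q : w2 ≠ q := by rintro rfl; rw [hval] at h2; exact lt_irrefl _ h2
      have hw2mem : w2 ∈ Ioo p q :=
        ⟨lt_of_le_of_ne hw2K.1 (Ne.symm hw2p), lt_of_le_of_ne hw2K.2 hw2q⟩
      refine no_open_ge hO ⟨w2, hw2mem, rfl⟩ ?_
      rintro x ⟨u, hu, rfl⟩
      exact hw2 u (Ioo_subset_Icc_self hu)
    · push_neg at h1 h2
      have hmval : h ((p + q) / 2) = h p :=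
        le_antisymm (le_trans (hw1 _ (Ioo_subset_Icc_self hmid)) h1)
          (le_trans h2 (hw2 _ (Ioo_subset_Icc_self hmid)))
      refine no_open_le hO ⟨_, hmid, hmval⟩ ?_
      rintro x ⟨u, hu, rfl⟩
      calc h u ≤ h w1 := hw1 u (Ioo_subset_Icc_self hu)
        _ ≤ h p := h1

/-- Local fiber-discreteness on ℝ. -/
lemma locR {V : Set ℝ} (hV : IsOpen V) {h : ℝ → ℝ} (hc : ContinuousOn h V)
    (ho : ∀ O : Set ℝ, O ⊆ V → IsOpen O → IsOpen (h '' O))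
    {z : ℝ} (hz : z ∈ V)
    (hacc : AccPt z (𝓟 {x | x ∈ V ∧ h x = h z})) : False := by
  obtain ⟨ε, hε, hball⟩ := Metric.isOpen_iff.mp hV z hz
  rw [accPt_iff_nhds] at hacc
  obtain ⟨p, ⟨hpb, hpV, hph⟩, hpne⟩ :=
    hacc (Metric.ball z ε) (Metric.ball_mem_nhds z hε)
  rw [Metric.mem_ball, Real.dist_eq, abs_lt] at hpb
  rcases hpne.lt_or_gt with hlt | hlt
  · refine coreR hc ho hlt ?_ hph
    intro u hu
    apply hball
    rw [Metric.mem_ball, Real.dist_eq, abs_lt]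
    constructor <;> [linarith [hu.1]; linarith [hu.2]]
  · refine coreR hc ho hlt ?_ hph.symm
    intro u hu
    apply hball
    rw [Metric.mem_ball, Real.dist_eq, abs_lt]
    constructor <;> [linarith [hu.1]; linarith [hu.2]]

section IccModel

variable {a b : ℝ}

lemma icc_no_open_le {S : Set (Icc a b)} (hS : IsOpen S) {t : Icc a b} (ht : t ∈ S)
    (htb : (t : ℝ) < b) (hle : ∀ s ∈ S, (s : ℝ) ≤ (t : ℝ)) : False := by
  have hN : S ∈ 𝓝 t := hS.mem_nhds ht
  rw [nhds_subtype_eq_comap, mem_comap] at hN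
  obtain ⟨U, hU, hUS⟩ := hN
  obtain ⟨ε, hε, hball⟩ := Metric.mem_nhds_iff.mp hU
  set s : ℝ := min b ((t : ℝ) + ε / 2) with hs
  have hts : (t : ℝ) < s := lt_min htb (by linarith)
  have hsb : s ≤ b := min_le_left _ _
  have hsa : a ≤ s := le_trans (le_trans t.2.1 hts.le) (le_refl s)
  have hsmem : (⟨s, hsa, hsb⟩ : Icc a b) ∈ S := by
    apply hUS
    apply hball
    rw [Metric.mem_ball, Real.dist_eq, abs_lt]
    constructor
    · have : s ≤ (t : ℝ) + ε / 2 := min_le_right _ _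
      linarith
    · have : s ≤ (t : ℝ) + ε / 2 := min_le_right _ _
      linarith
  have := hle _ hsmem
  simp only at this
  linarith

lemma icc_no_open_ge {S : Set (Icc a b)} (hS : IsOpen S) {t : Icc a b} (ht : t ∈ S)
    (hta : a < (t : ℝ)) (hle : ∀ s ∈ S, (t : ℝ) ≤ (s : ℝ)) : False := by
  have hN : S ∈ 𝓝 t := hS.mem_nhds ht
  rw [nhds_subtype_eq_comap, mem_comap] at hN
  obtain ⟨U, hU, hUS⟩ := hN
  obtain ⟨ε, hε, hball⟩ := Metric.mem_nhds_iff.mp hU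
  set s : ℝ := max a ((t : ℝ) - ε / 2) with hs
  have hts : s < (t : ℝ) := max_lt hta (by linarith)
  have hsa : a ≤ s := le_max_left _ _
  have hsb : s ≤ b := le_trans hts.le t.2.2
  have hsmem : (⟨s, hsa, hsb⟩ : Icc a b) ∈ S := by
    apply hUS
    apply hball
    rw [Metric.mem_ball, Real.dist_eq, abs_lt]
    constructor
    · have : (t : ℝ) - ε / 2 ≤ s := le_max_right _ _
      linarith
    · have : (t : ℝ) - ε / 2 ≤ s := le_max_right _ _
      linarith
  have := hle _ hsmem
  simp only at this
  linarith

lemma coreIcc (hab : a < b) {g : Icc a b → Icc a b} (hgc : Continuous g) (hgo : IsOpenMap g)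
    {p q : Icc a b} (hpq : p < q) (hval : g p = g q)
    (hA : ∀ u, p ≤ u → u ≤ q → ((g u : ℝ) < b ∨ g u = g p))
    (hB : ∀ u, p ≤ u → u ≤ q → (a < (g u : ℝ) ∨ g u = g p)) : False := by
  have hpq' : (p : ℝ) < (q : ℝ) := hpq
  -- the closed interval between p and q, inside the subtype
  have hKpre : (Subtype.val ⁻¹' (Icc (p : ℝ) (q : ℝ)) : Set (Icc a b)) = Icc p q := by
    ext u; simp [Set.mem_Icc, Subtype.coe_le_coe]
  have hKclosed : IsClosed (Icc p q : Set (Icc a b)) := by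
    rw [← hKpre]; exact isClosed_Icc.preimage continuous_subtype_val
  have hK : IsCompact (Icc p q : Set (Icc a b)) := hKclosed.isCompact
  have hne : (Icc p q : Set (Icc a b)).Nonempty := ⟨p, le_refl p, hpq.le⟩
  set G : Icc a b → ℝ := fun u => (g u : ℝ) with hG
  have hGc : Continuous G := continuous_subtype_val.comp hgc
  obtain ⟨w1, hw1K, hw1⟩ := hK.exists_isMaxOn hne hGc.continuousOn
  obtain ⟨w2, hw2K, hw2⟩ := hK.exists_isMinOn hne hGc.continuousOn
  rw [isMaxOn_iff] at hw1
  rw [isMinOn_iff] at hw2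
  -- the open interval
  have hOpre : (Subtype.val ⁻¹' (Ioo (p : ℝ) (q : ℝ)) : Set (Icc a b)) = Ioo p q := by
    ext u; simp [Set.mem_Ioo, Subtype.coe_lt_coe]
  have hOopen : IsOpen (Ioo p q : Set (Icc a b)) := by
    rw [← hOpre]; exact isOpen_Ioo.preimage continuous_subtype_val
  have hOsub : (Ioo p q : Set (Icc a b)) ⊆ Icc p q := Ioo_subset_Icc_self
  have hmid : ((⟨((p : ℝ) + q) / 2, by constructor <;> [linarith [p.2.1, q.2.1]; linarith [p.2.2, q.2.2]]⟩ : Icc a b)) ∈ (Ioo p q : Set (Icc a b)) := by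
    constructor
    · show (p : ℝ) < _; exact (by dsimp; linarith)
    · show _ < (q : ℝ); exact (by dsimp; linarith)
  have hIm : IsOpen (g '' (Ioo p q : Set (Icc a b))) := hgo _ hOopen
  by_cases h1 : G p < G w1
  · simp only [hG] at h1
    have hw1p : w1 ≠ p := by rintro rfl; exact lt_irrefl _ h1
    have hw1q : w1 ≠ q := by
      rintro rfl
      rw [hval] at h1; exact lt_irrefl _ h1
    have hw1mem : w1 ∈ (Ioo p q : Set (Icc a b)) :=
      ⟨lt_of_le_of_ne hw1K.1 (Ne.symm hw1p), lt_of_le_of_ne hw1K.2 hw1q⟩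
    have hlt : (g w1 : ℝ) < b := by
      rcases hA w1 hw1K.1 hw1K.2 with h | h
      · exact h
      · exfalso; rw [h] at h1; exact lt_irrefl _ h1
    refine icc_no_open_le hIm ⟨w1, hw1mem, rfl⟩ hlt ?_
    rintro s ⟨u, hu, rfl⟩
    exact hw1 u (hOsub hu)
  · by_cases h2 : G w2 < G p
    · simp only [hG] at h2
      have hw2p : w2 ≠ p := by rintro rfl; exact lt_irrefl _ h2
      have hw2q : w2 ≠ q := by
        rintro rfl; rw [hval] at h2; exact lt_irrefl _ h2
      have hw2mem : w2 ∈ (Ioo p q : Set (Icc a b)) :=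
        ⟨lt_of_le_of_ne hw2K.1 (Ne.symm hw2p), lt_of_le_of_ne hw2K.2 hw2q⟩
      have hgt : a < (g w2 : ℝ) := by
        rcases hB w2 hw2K.1 hw2K.2 with h | h
        · exact h
        · exfalso; rw [h] at h2; exact lt_irrefl _ h2
      refine icc_no_open_ge hIm ⟨w2, hw2mem, rfl⟩ hgt ?_
      rintro s ⟨u, hu, rfl⟩
      exact hw2 u (hOsub hu)
    · push_neg at h1 h2
      -- g is constant on Icc p q
      have hconst : ∀ u ∈ (Icc p q : Set (Icc a b)), g u = g p := by
        intro u hu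
        have hle' : G u ≤ G p := le_trans (hw1 u hu) h1
        have hge' : G p ≤ G u := le_trans h2 (hw2 u hu)
        exact Subtype.ext (le_antisymm hle' hge')
      have hmem : g p ∈ g '' (Ioo p q : Set (Icc a b)) :=
        ⟨_, hmid, hconst _ (hOsub hmid)⟩
      by_cases hgb : (g p : ℝ) < b
      · refine icc_no_open_le hIm hmem hgb ?_
        rintro s ⟨u, hu, rfl⟩
        rw [hconst u (hOsub hu)]
      · refine icc_no_open_ge hIm hmem ?_ ?_
        · have : (g p : ℝ) = b := le_antisymm (g p).2.2 (not_lt.1 hgb)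
          rw [this]; exact hab
        · rintro s ⟨u, hu, rfl⟩
          rw [hconst u (hOsub hu)]

lemma subFiberIcc (hab : a < b) {g : Icc a b → Icc a b}
    (hgc : Continuous g) (hgo : IsOpenMap g) {z : Icc a b}
    {N : Set (Icc a b)} (hNo : IsOpen N) (hzN : z ∈ N)
    (HA : ∀ u ∈ N, ((g u : ℝ) < b ∨ g u = g z))
    (HB : ∀ u ∈ N, (a < (g u : ℝ) ∨ g u = g z))
    (hacc : AccPt z (𝓟 (g ⁻¹' {g z}))) : False := by
  have hN : N ∈ 𝓝 z := hNo.mem_nhds hzN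
  rw [nhds_subtype_eq_comap, mem_comap] at hN
  obtain ⟨U, hU, hUN⟩ := hN
  obtain ⟨ε, hε, hball⟩ := Metric.mem_nhds_iff.mp hU
  have hbmem : (Subtype.val ⁻¹' Metric.ball (z : ℝ) ε : Set (Icc a b)) ∈ 𝓝 z := by
    apply ContinuousAt.preimage_mem_nhds continuous_subtype_val.continuousAt
    exact Metric.ball_mem_nhds _ hε
  rw [accPt_iff_nhds] at hacc
  obtain ⟨p, ⟨hpb, hpf⟩, hpz⟩ := hacc _ hbmem
  have hpg : g p = g z := hpf
  have hbsub : (Subtype.val ⁻¹' Metric.ball (z : ℝ) ε : Set (Icc a b)) ⊆ N :=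
    fun u hu => hUN (hball hu)
  have hpball : |(p : ℝ) - (z : ℝ)| < ε := by
    have := hpb; rwa [Set.mem_preimage, Metric.mem_ball, Real.dist_eq] at this
  rw [abs_lt] at hpball
  have hpne : (p : ℝ) ≠ (z : ℝ) := fun h => hpz (Subtype.ext h)
  have hmemN : ∀ u : Icc a b, min (p : ℝ) (z : ℝ) ≤ (u : ℝ) → (u : ℝ) ≤ max (p : ℝ) (z : ℝ) → u ∈ N := by
    intro u h1 h2
    apply hbsub
    rw [Set.mem_preimage, Metric.mem_ball, Real.dist_eq, abs_lt]
    rcases le_total (p : ℝ) (z : ℝ) with h | h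
    · rw [min_eq_left h] at h1; rw [max_eq_right h] at h2
      constructor <;> linarith
    · rw [min_eq_right h] at h1; rw [max_eq_left h] at h2
      constructor <;> linarith
  rcases hpne.lt_or_gt with hlt | hlt
  · refine coreIcc hab hgc hgo (p := p) (q := z) hlt hpg ?_ ?_
    · intro u h1 h2
      have hu : u ∈ N := hmemN u (by rw [min_eq_left hlt.le]; exact h1) (by rw [max_eq_right hlt.le]; exact h2)
      rcases HA u hu with h | h
      · exact Or.inl h
      · exact Or.inr (h.trans hpg.symm)
    · intro u h1 h2
      have hu : u ∈ N := hmemN u (by rw [min_eq_left hlt.le]; exact h1) (by rw [max_eq_right hlt.le]; exact h2)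
      rcases HB u hu with h | h
      · exact Or.inl h
      · exact Or.inr (h.trans hpg.symm)
  · refine coreIcc hab hgc hgo (p := z) (q := p) hlt hpg.symm ?_ ?_
    · intro u h1 h2
      have hu : u ∈ N := hmemN u (by rw [min_eq_right hlt.le]; exact h1) (by rw [max_eq_left hlt.le]; exact h2)
      exact HA u hu
    · intro u h1 h2
      have hu : u ∈ N := hmemN u (by rw [min_eq_right hlt.le]; exact h1) (by rw [max_eq_left hlt.le]; exact h2)
      exact HB u hu

lemma fiberIcc (hab : a < b) {g : Icc a b → Icc a b}
    (hgc : Continuous g) (hgo : IsOpenMap g) (z : Icc a b)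
    (hacc : AccPt z (𝓟 (g ⁻¹' {g z}))) : False := by
  set G : Icc a b → ℝ := fun u => (g u : ℝ) with hG
  have hGc : Continuous G := continuous_subtype_val.comp hgc
  by_cases hcb : (g z : ℝ) < b
  · by_cases hac : a < (g z : ℝ)
    · refine subFiberIcc hab hgc hgo (N := G ⁻¹' (Ioo a b)) (isOpen_Ioo.preimage hGc)
        ⟨hac, hcb⟩ ?_ ?_ hacc
      · exact fun u hu => Or.inl hu.2
      · exact fun u hu => Or.inl hu.1
    · have hza : (g z : ℝ) = a := le_antisymm (not_lt.1 hac) (g z).2.1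
      refine subFiberIcc hab hgc hgo (N := G ⁻¹' (Iio b)) (isOpen_Iio.preimage hGc)
        hcb ?_ ?_ hacc
      · exact fun u hu => Or.inl hu
      · intro u _
        rcases lt_or_ge a (g u : ℝ) with h | h
        · exact Or.inl h
        · exact Or.inr (Subtype.ext (by rw [hza]; exact le_antisymm h (g u).2.1))
  · have hzb : (g z : ℝ) = b := le_antisymm (g z).2.2 (not_lt.1 hcb)
    refine subFiberIcc hab hgc hgo (N := G ⁻¹' (Ioi a)) (isOpen_Ioi.preimage hGc)
      (by show a < G z; rw [hG]; simp only; rw [hzb]; exact hab) ?_ ?_ hacc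
    · intro u _
      rcases lt_or_ge (g u : ℝ) b with h | h
      · exact Or.inl h
      · exact Or.inr (Subtype.ext (by rw [hzb]; exact le_antisymm (g u).2.2 h))
    · exact fun u hu => Or.inl hu

end IccModel

section CircleModel



lemma half_ne_circle : ∀ t : ℝ, ((t : S1) = ((t - 2⁻¹ : ℝ) : S1)) → False := by
  intro t h
  have h0 : ((2⁻¹ : ℝ) : S1) = 0 := by
    have : ((t - (t - 2⁻¹) : ℝ) : S1) = (t : S1) - ((t - 2⁻¹ : ℝ) : S1) :=
      AddCircle.coe_sub _ _ _
    rw [← h, sub_self] at this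
    convert this using 2
    ring
  rw [AddCircle.coe_eq_zero_iff] at h0
  obtain ⟨n, hn⟩ := h0
  rw [zsmul_eq_mul, mul_one] at hn
  have h2 : ((2 * n : ℤ) : ℝ) = ((1 : ℤ) : ℝ) := by push_cast; linarith
  have h3 : (2 * n : ℤ) = 1 := Int.cast_injective h2
  omega

lemma fiberCircle {g : S1 → S1} (hgc : Continuous g) (hgo : IsOpenMap g)
    (z : S1) (hacc : AccPt z (𝓟 (g ⁻¹' {g z}))) : False := by
  haveI : Fact ((0 : ℝ) < 1) := ⟨one_pos⟩
  obtain ⟨zr, rfl⟩ : ∃ zr : ℝ, (zr : S1) = z := Quotient.exists_rep z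
  obtain ⟨cr, hcr⟩ : ∃ cr : ℝ, (cr : S1) = g ((zr : ℝ) : S1) := Quotient.exists_rep _
  set ψ := AddCircle.openPartialHomeomorphCoe (1 : ℝ) (cr - 2⁻¹) with hψ
  have hctarget : g ((zr : ℝ) : S1) ∈ ψ.target := by
    rw [AddCircle.openPartialHomeomorphCoe_target]
    intro hmem
    rw [Set.mem_singleton_iff] at hmem
    exact half_ne_circle cr (by rw [hcr, hmem])
  -- the chart value of the fiber value
  have hcrmem : cr ∈ Set.Ico (cr - 2⁻¹) (cr - 2⁻¹ + 1) := ⟨by linarith, by linarith⟩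
  have heqIco : (AddCircle.equivIco 1 (cr - 2⁻¹)) ((cr : ℝ) : S1) = ⟨cr, hcrmem⟩ := by
    rw [Equiv.apply_eq_iff_eq_symm_apply]; rfl
  set h : ℝ → ℝ := fun x => ((AddCircle.equivIco 1 (cr - 2⁻¹)) (g ((x : ℝ) : S1)) : ℝ) with hh
  have hkey : ∀ x : ℝ, g ((x : ℝ) : S1) = g ((zr : ℝ) : S1) → h x = cr := by
    intro x hx
    rw [hh]; simp only
    rw [hx, ← hcr, heqIco]
  set V : Set ℝ := Set.Ioo (zr - 2⁻¹) (zr - 2⁻¹ + 1) ∩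
      (fun x : ℝ => g ((x : ℝ) : S1)) ⁻¹' ({((cr - 2⁻¹ : ℝ) : S1)}ᶜ) with hV
  have hmkc : Continuous (fun x : ℝ => ((x : ℝ) : S1)) := continuous_quotient_mk'
  have hVopen : IsOpen V := by
    apply IsOpen.inter isOpen_Ioo
    exact (isOpen_compl_singleton).preimage (hgc.comp hmkc)
  have hzrV : zr ∈ V := by
    constructor
    · constructor <;> [linarith; linarith]
    · simp only [Set.mem_preimage, Set.mem_compl_iff, Set.mem_singleton_iff]
      intro hmem
      exact half_ne_circle cr (by rw [hcr, hmem])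
  have hhc : ContinuousOn h V := by
    intro x hx
    apply ContinuousAt.continuousWithinAt
    have h1 : ContinuousAt (fun s : S1 => ((AddCircle.equivIco 1 (cr - 2⁻¹)) s : ℝ))
        (g ((x : ℝ) : S1)) := by
      apply ContinuousAt.comp continuousAt_subtype_val
      exact AddCircle.continuousAt_equivIco 1 (cr - 2⁻¹) hx.2
    have h2 : ContinuousAt (fun x : ℝ => g ((x : ℝ) : S1)) x :=
      (hgc.continuousAt).comp (hmkc.continuousAt)
    exact ContinuousAt.comp (f := fun x : ℝ => g ((x : ℝ) : S1)) h1 h2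
  have hho : ∀ O : Set ℝ, O ⊆ V → IsOpen O → IsOpen (h '' O) := by
    intro O hOV hOopen
    have him : h '' O = ψ.symm '' (g '' ((fun x : ℝ => ((x : ℝ) : S1)) '' O)) := by
      rw [Set.image_image, Set.image_image]
      rfl
    rw [him]
    apply ψ.isOpen_image_symm_of_subset_target
    · exact hgo _ (QuotientAddGroup.isOpenMap_coe _ hOopen)
    · rintro s ⟨u, ⟨x, hxO, rfl⟩, rfl⟩
      rw [AddCircle.openPartialHomeomorphCoe_target]
      exact (hOV hxO).2
  have haccR : AccPt zr (𝓟 {x | x ∈ V ∧ h x = h zr}) := by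
    rw [accPt_iff_nhds]
    intro U hU
    have hW : IsOpen ((fun x : ℝ => ((x : ℝ) : S1)) '' (interior U ∩ V)) :=
      QuotientAddGroup.isOpenMap_coe _ (isOpen_interior.inter hVopen)
    have hzW : ((zr : ℝ) : S1) ∈ (fun x : ℝ => ((x : ℝ) : S1)) '' (interior U ∩ V) :=
      ⟨zr, ⟨mem_interior_iff_mem_nhds.2 hU, hzrV⟩, rfl⟩
    rw [accPt_iff_nhds] at hacc
    obtain ⟨y, ⟨hyW, hyF⟩, hyne⟩ := hacc _ (hW.mem_nhds hzW)
    obtain ⟨x, ⟨hxU, hxV⟩, rfl⟩ := hyW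
    have hgx : g ((x : ℝ) : S1) = g ((zr : ℝ) : S1) := hyF
    refine ⟨x, ⟨interior_subset hxU, hxV, ?_⟩, ?_⟩
    · rw [hkey x hgx, hkey zr rfl]
    · rintro rfl; exact hyne rfl
  exact locR hVopen hhc hho hzrV haccR

/-- Nontrivial preconnected subsets of the circle have nonempty interior. -/
lemma modelS1Conn {C : Set S1} (hC : IsPreconnected C) (hnt : C.Nontrivial) :
    (interior C).Nonempty := by
  haveI : Fact ((0 : ℝ) < 1) := ⟨one_pos⟩
  by_cases huniv : C = univ
  · rw [huniv, interior_univ]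
    exact ⟨(0 : S1), trivial⟩
  · obtain ⟨pp, hpp⟩ : ∃ pp : S1, pp ∉ C := by
      by_contra hcon
      push_neg at hcon
      exact huniv (Set.eq_univ_iff_forall.2 hcon)
    obtain ⟨pr, rfl⟩ : ∃ pr : ℝ, (pr : S1) = pp := Quotient.exists_rep pp
    set r : S1 → ℝ := fun s => ((AddCircle.equivIoc 1 pr) s : ℝ) with hr
    have hrc : ContinuousOn r C := by
      intro s hs
      apply ContinuousAt.continuousWithinAt
      apply ContinuousAt.comp continuousAt_subtype_val
      apply AddCircle.continuousAt_equivIoc 1 pr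
      intro hEq; rw [hEq] at hs; exact hpp hs
    have hrinj : ∀ x y : S1, r x = r y → x = y := by
      intro x y hxy
      exact (AddCircle.equivIoc 1 pr).injective (Subtype.ext hxy)
    obtain ⟨x, hxC, y, hyC, hxy⟩ := hnt
    have hrxy : r x ≠ r y := fun h => hxy (hrinj _ _ h)
    have hconn : IsPreconnected (r '' C) := hC.image r hrc
    set u := min (r x) (r y) with hu
    set v := max (r x) (r y) with hv
    have huv : u < v := by
      rcases hrxy.lt_or_gt with h | h
      · rw [hu, hv, min_eq_left h.le, max_eq_right h.le]; exact h
      · rw [hu, hv, min_eq_right h.le, max_eq_left h.le]; exact h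
    have huC : u ∈ r '' C := by
      rcases le_total (r x) (r y) with h | h
      · rw [hu, min_eq_left h]; exact ⟨x, hxC, rfl⟩
      · rw [hu, min_eq_right h]; exact ⟨y, hyC, rfl⟩
    have hvC : v ∈ r '' C := by
      rcases le_total (r x) (r y) with h | h
      · rw [hv, max_eq_right h]; exact ⟨y, hyC, rfl⟩
      · rw [hv, max_eq_left h]; exact ⟨x, hxC, rfl⟩
    have hIcc : Icc u v ⊆ r '' C := hconn.Icc_subset huC hvC
    have hsub : (fun t : ℝ => ((t : ℝ) : S1)) '' (Ioo u v) ⊆ C := by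
      rintro _ ⟨t, htuv, rfl⟩
      obtain ⟨w, hwC, hwt⟩ := hIcc (Ioo_subset_Icc_self htuv)
      have ht : t ∈ Set.Ioc pr (pr + 1) := by
        have := ((AddCircle.equivIoc 1 pr) w).2
        rw [hr] at hwt; simp only at hwt
        rw [hwt] at this
        exact this
      have hw2 : (AddCircle.equivIoc 1 pr) w = ⟨t, ht⟩ := Subtype.ext hwt
      have : w = ((t : ℝ) : S1) := by
        have h3 := (AddCircle.equivIoc 1 pr).symm_apply_apply w
        rw [← h3, hw2]
        rfl
      show ((t : ℝ) : S1) ∈ C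
      rwa [← this]
    have hopen : IsOpen ((fun t : ℝ => ((t : ℝ) : S1)) '' (Ioo u v)) :=
      QuotientAddGroup.isOpenMap_coe _ isOpen_Ioo
    have hne : ((fun t : ℝ => ((t : ℝ) : S1)) '' (Ioo u v)).Nonempty :=
      ⟨_, ⟨(u + v) / 2, ⟨by linarith, by linarith⟩, rfl⟩⟩
    obtain ⟨w, hw⟩ := hne
    exact ⟨w, interior_maximal hsub hopen hw⟩

/-- Nontrivial preconnected subsets of a closed interval have nonempty interior. -/
lemma modelIccConn {a b : ℝ} {C : Set (Icc a b)} (hC : IsPreconnected C)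
    (hnt : C.Nontrivial) : (interior C).Nonempty := by
  obtain ⟨x, hxC, y, hyC, hxy⟩ := hnt
  have hconn : IsPreconnected (Subtype.val '' C) := hC.image _ continuous_subtype_val.continuousOn
  have hvne : (x : ℝ) ≠ (y : ℝ) := fun h => hxy (Subtype.ext h)
  set u := min (x : ℝ) (y : ℝ) with hu
  set v := max (x : ℝ) (y : ℝ) with hv
  have huv : u < v := by
    rcases hvne.lt_or_gt with h | h
    · rw [hu, hv, min_eq_left h.le, max_eq_right h.le]; exact h
    · rw [hu, hv, min_eq_right h.le, max_eq_left h.le]; exact h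
  have huC : u ∈ Subtype.val '' C := by
    rcases le_total (x : ℝ) (y : ℝ) with h | h
    · rw [hu, min_eq_left h]; exact ⟨x, hxC, rfl⟩
    · rw [hu, min_eq_right h]; exact ⟨y, hyC, rfl⟩
  have hvC : v ∈ Subtype.val '' C := by
    rcases le_total (x : ℝ) (y : ℝ) with h | h
    · rw [hv, max_eq_right h]; exact ⟨y, hyC, rfl⟩
    · rw [hv, max_eq_left h]; exact ⟨x, hxC, rfl⟩
  have hIcc : Icc u v ⊆ Subtype.val '' C := hconn.Icc_subset huC hvC
  set W : Set (Icc a b) := Subtype.val ⁻¹' (Ioo u v) with hW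
  have hWopen : IsOpen W := isOpen_Ioo.preimage continuous_subtype_val
  have hWsub : W ⊆ C := by
    intro w hw
    obtain ⟨c', hc'C, hc'⟩ := hIcc (Ioo_subset_Icc_self hw)
    rwa [← Subtype.ext hc'.symm] at hc'C
  have hau : a ≤ u := by
    rcases le_total (x : ℝ) (y : ℝ) with h | h
    · rw [hu, min_eq_left h]; exact x.2.1
    · rw [hu, min_eq_right h]; exact y.2.1
  have hvb : v ≤ b := by
    rcases le_total (x : ℝ) (y : ℝ) with h | h
    · rw [hv, max_eq_right h]; exact y.2.2
    · rw [hv, max_eq_left h]; exact x.2.2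
  have hWne : W.Nonempty := by
    refine ⟨⟨(u + v) / 2, by constructor <;> [linarith; linarith]⟩, ?_, ?_⟩ <;>
      [skip; skip] <;> simp only [hW]
    · show u < (u + v) / 2; linarith
    · show (u + v) / 2 < v; linarith
  obtain ⟨w, hw⟩ := hWne
  exact ⟨w, interior_maximal hWsub hWopen hw⟩

end CircleModel

section Transfer

lemma accPt_image {X Y : Type*} [TopologicalSpace X] [TopologicalSpace Y] (e : X ≃ₜ Y)
    {x : X} {S : Set X} (h : AccPt x (𝓟 S)) : AccPt (e x) (𝓟 (e '' S)) := by
  rw [accPt_iff_nhds] at h ⊢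
  intro U hU
  obtain ⟨y, ⟨hy1, hy2⟩, hy3⟩ := h (e ⁻¹' U)
    (e.continuous.continuousAt.preimage_mem_nhds hU)
  exact ⟨e y, ⟨hy1, ⟨y, hy2, rfl⟩⟩, fun hc => hy3 (e.injective hc)⟩

/-- Fiber discreteness for continuous open self-maps of the circle or an interval. -/
lemma fiberX {X : Type*} [TopologicalSpace X] (hX : IsCircleOrInterval X) {φ : X → X}
    (hc : Continuous φ) (ho : IsOpenMap φ) (z : X)
    (h : AccPt z (𝓟 (φ ⁻¹' {φ z}))) : False := by
  rcases hX with ⟨⟨e⟩⟩ | ⟨a, b, hab, ⟨e⟩⟩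
  · set g : S1 → S1 := e ∘ φ ∘ e.symm with hg
    have hacc' : AccPt (e z) (𝓟 (g ⁻¹' {g (e z)})) := by
      refine (accPt_image e h).mono (principal_mono.2 ?_)
      rintro _ ⟨u, hu, rfl⟩
      simp only [Set.mem_preimage, Set.mem_singleton_iff] at hu ⊢
      simp only [hg, Function.comp_apply, Homeomorph.symm_apply_apply]
      rw [hu]
    exact fiberCircle (e.continuous.comp (hc.comp e.symm.continuous))
      ((e.isOpenMap.comp ho).comp e.symm.isOpenMap) (e z) hacc'
  · set g : Icc a b → Icc a b := e ∘ φ ∘ e.symm with hg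
    have hacc' : AccPt (e z) (𝓟 (g ⁻¹' {g (e z)})) := by
      refine (accPt_image e h).mono (principal_mono.2 ?_)
      rintro _ ⟨u, hu, rfl⟩
      simp only [Set.mem_preimage, Set.mem_singleton_iff] at hu ⊢
      simp only [hg, Function.comp_apply, Homeomorph.symm_apply_apply]
      rw [hu]
    exact fiberIcc hab (e.continuous.comp (hc.comp e.symm.continuous))
      ((e.isOpenMap.comp ho).comp e.symm.isOpenMap) (e z) hacc'

/-- Nontrivial preconnected subsets of a circle-or-interval space have nonempty interior. -/
lemma interiorX {X : Type*} [TopologicalSpace X] (hX : IsCircleOrInterval X)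
    {C : Set X} (hC : IsPreconnected C) (hnt : C.Nontrivial) :
    (interior C).Nonempty := by
  rcases hX with ⟨⟨e⟩⟩ | ⟨a, b, hab, ⟨e⟩⟩
  · have h1 : IsPreconnected (e '' C) := hC.image _ e.continuous.continuousOn
    have h2 : (e '' C).Nontrivial := hnt.image e.injective
    obtain ⟨y, hy⟩ := modelS1Conn h1 h2
    refine ⟨e.symm y, ?_⟩
    have h4 : e.symm '' (e '' C) = C := by
      rw [Set.image_image]; simp
    have h3 : e.symm '' interior (e '' C) = interior C := by
      rw [e.symm.image_interior, h4]
    rw [← h3]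
    exact ⟨y, hy, rfl⟩
  · have h1 : IsPreconnected (e '' C) := hC.image _ e.continuous.continuousOn
    have h2 : (e '' C).Nontrivial := hnt.image e.injective
    obtain ⟨y, hy⟩ := modelIccConn h1 h2
    refine ⟨e.symm y, ?_⟩
    have h4 : e.symm '' (e '' C) = C := by
      rw [Set.image_image]; simp
    have h3 : e.symm '' interior (e '' C) = interior C := by
      rw [e.symm.image_interior, h4]
    rw [← h3]
    exact ⟨y, hy, rfl⟩

lemma compactX {X : Type*} [TopologicalSpace X] (hX : IsCircleOrInterval X) :
    CompactSpace X := by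
  rcases hX with ⟨⟨e⟩⟩ | ⟨a, b, hab, ⟨e⟩⟩
  · haveI : Fact ((0 : ℝ) < 1) := ⟨one_pos⟩
    exact e.symm.compactSpace
  · exact e.symm.compactSpace

end Transfer

theorem stmt8 {X : Type*} [TopologicalSpace X] (hX : IsCircleOrInterval X)
    {n : ℕ} (f : Fin n → X → X)
    (hcont : ∀ i, Continuous (f i)) (hopen : ∀ i, IsOpenMap (f i))
    (M : Set X) (hM : IsMinimalIFS f M) (hint : interior M = ∅) :
    M.Finite ∨ IsCantorSet M := by
  rcases M.finite_or_infinite with hfin | hinf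
  · exact Or.inl hfin
  right
  obtain ⟨hne, hclosed, hinv, hmin⟩ := hM
  haveI : CompactSpace X := compactX hX
  have hMc : IsCompact M := hclosed.isCompact
  -- an accumulation point of M
  obtain ⟨z₀, hz₀⟩ := hinf.exists_accPt_principal
  have hz₀M : z₀ ∈ M := by
    have h1 : ClusterPt z₀ (𝓟 M) := hz₀.clusterPt
    rw [← hclosed.closure_eq]
    exact mem_closure_iff_clusterPt.2 h1
  -- the set of accumulation points of M inside M
  set M' : Set X := {x | x ∈ M ∧ AccPt x (𝓟 M)} with hM'
  have hz₀M' : z₀ ∈ M' := ⟨hz₀M, hz₀⟩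
  -- M' is invariant
  have hM'inv : ∀ i, ∀ x ∈ M', f i x ∈ M' := by
    intro i x hx
    refine ⟨hinv i ⟨x, hx.1, rfl⟩, ?_⟩
    by_contra hn
    rw [accPt_iff_nhds] at hn
    push_neg at hn
    obtain ⟨U, hU, hUy⟩ := hn
    have haccfib : AccPt x (𝓟 ((f i) ⁻¹' {f i x})) := by
      rw [accPt_iff_nhds]
      intro W hW
      have hWV : W ∩ (f i) ⁻¹' U ∈ 𝓝 x :=
        Filter.inter_mem hW ((hcont i).continuousAt.preimage_mem_nhds hU)
      obtain ⟨y, ⟨⟨hyW, hyV⟩, hyM⟩, hyx⟩ := accPt_iff_nhds.mp hx.2 _ hWV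
      have hfy : f i y ∈ U ∩ M := ⟨hyV, hinv i ⟨y, hyM, rfl⟩⟩
      exact ⟨y, ⟨hyW, hUy _ hfy⟩, hyx⟩
    exact fiberX hX (hcont i) (hopen i) x haccfib
  -- orbits of points of M' stay in M'
  have horb : ∀ x ∈ M', ∀ l : List (Fin n), applyWord f l x ∈ M' := by
    intro x hx l
    induction l with
    | nil => exact hx
    | cons i l ih => exact hM'inv i _ ih
  -- M ⊆ closure M'
  have hMsub : M ⊆ closure M' := by
    have h1 : orbitIFS f z₀ ⊆ M' := by
      rintro y ⟨l, _, rfl⟩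
      exact horb z₀ hz₀M' l
    have h2 := hmin z₀ hz₀M
    rw [← h2]
    exact closure_mono h1
  -- M is perfect
  have hperf : ∀ y ∈ M, AccPt y (𝓟 M) := by
    intro y hy
    rw [accPt_iff_nhds]
    intro U hU
    obtain ⟨x', hx'U, hx'M'⟩ := mem_closure_iff_nhds.mp (hMsub hy) U hU
    by_cases hxy : x' = y
    · subst hxy
      exact accPt_iff_nhds.mp hx'M'.2 U hU
    · exact ⟨x', ⟨hx'U, hx'M'.1⟩, hxy⟩
  refine ⟨hne, hMc, ⟨hclosed, fun y hy => hperf y hy⟩, ?_⟩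
  -- totally disconnected
  intro t hts htconn
  by_contra hnsub
  rw [Set.not_subsingleton_iff] at hnsub
  obtain ⟨w, hw⟩ := interiorX hX htconn hnsub
  have : w ∈ interior M := interior_mono hts hw
  rw [hint] at this
  exact this
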